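/- arXiv:2012.08400 — 3 statements merged into one kernel-verified Lean document; each statement's English description precedes it below -/
import Mathlib

section
/- Let n = 6 and define j₀ = 1 and j_i = 3 for all nonzero i ∈ ℤ/(6). Let X = (ℤ/(6))² and define r : X × X → X × X by r((i,j),(k,l)) = (σ_{(i,j)}(k,l), σ_{σ_{(i,j)}(k,l)}⁻¹(i,j)), where σ_{(i,j)}(k,l) = (k + j, l − j_{k+j−i}) (so σ_{(i,j)}(k,l) = (k+j, l − 3 + 2δ_{k+j−i,0})). Then (X,r) is an indecomposable and irretractable solution of the YBE, but (X,r) is not simple: there is a surjective homomorphism of solutions from (X,r) onto a solution of cardinality 2. -/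
open Function

/-- The map `r₁₂ = r × id` on `X³`. -/
def yb12 {X : Type*} (r : X × X → X × X) : X × X × X → X × X × X :=
  fun p => ((r (p.1, p.2.1)).1, ((r (p.1, p.2.1)).2, p.2.2))

/-- The map `r₂₃ = id × r` on `X³`. -/
def yb23 {X : Type*} (r : X × X → X × X) : X × X × X → X × X × X :=
  fun p => (p.1, r p.2)

/-- `(X, r)` is an involutive non-degenerate set-theoretic solution of the
Yang–Baxter equation. -/
structure IsYBSolution {X : Type*} (r : X × X → X × X) : Prop where
  invol : ∀ p, r (r p) = p
  sigma_bij : ∀ x, Function.Bijective (fun y => (r (x, y)).1)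
  gamma_bij : ∀ y, Function.Bijective (fun x => (r (x, y)).2)
  braid : yb12 r ∘ yb23 r ∘ yb12 r = yb23 r ∘ yb12 r ∘ yb23 r

/-- A homomorphism of solutions: `f (σ_x y) = σ'_{f x} (f y)`. -/
def IsSolHom {X Y : Type*} (r : X × X → X × X) (s : Y × Y → Y × Y) (f : X → Y) : Prop :=
  ∀ x y, f (r (x, y)).1 = (s (f x, f y)).1

/-- The permutation group `G(X,r)`: the subgroup of `Sym(X)` generated by the
permutations `σ_x`. -/
def permGroup {X : Type*} (r : X × X → X × X) : Subgroup (Equiv.Perm X) :=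
  Subgroup.closure {g : Equiv.Perm X | ∃ x, ∀ y, g y = (r (x, y)).1}

/-- `(X,r)` is indecomposable: `G(X,r)` acts transitively on `X`. -/
def IsIndecomposable {X : Type*} (r : X × X → X × X) : Prop :=
  ∀ x y : X, ∃ g ∈ permGroup r, g x = y

/-- `(X,r)` is irretractable: `σ_x = σ_y` implies `x = y`. -/
def IsIrretractable {X : Type*} (r : X × X → X × X) : Prop :=
  ∀ x y : X, (∀ z, (r (x, z)).1 = (r (y, z)).1) → x = y

/-- `(X,r)` is a simple solution: `|X| > 1` and every surjective homomorphism of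
solutions from `(X,r)` is either bijective or has a one-element target. -/
def IsSimpleSolution {X : Type u} (r : X × X → X × X) : Prop :=
  Nontrivial X ∧ ∀ (Y : Type u) (s : Y × Y → Y × Y), IsYBSolution s →
    ∀ f : X → Y, Function.Surjective f → IsSolHom r s f →
      Function.Bijective f ∨ Subsingleton Y

/-! ### Auxiliary definitions -/

def J0 (i : ZMod 6) : ZMod 6 := if i = 0 then 1 else 3

def r0 : (ZMod 6 × ZMod 6) × (ZMod 6 × ZMod 6) → (ZMod 6 × ZMod 6) × (ZMod 6 × ZMod 6) :=
  fun p =>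
    ((p.2.1 + p.1.2, p.2.2 - J0 (p.2.1 + p.1.2 - p.1.1)),
     (p.1.1 - p.2.2 + J0 (p.2.1 + p.1.2 - p.1.1),
      p.1.2 + J0 (p.2.1 + p.1.2 - p.1.1)))

lemma J0_neg (u : ZMod 6) : J0 (-u) = J0 u := by
  simp [J0, neg_eq_zero]

lemma J0_eq_one_iff (u : ZMod 6) : J0 u = 1 ↔ u = 0 := by
  unfold J0; split <;> simp_all <;> decide

lemma r0_invol : ∀ p, r0 (r0 p) = p := by
  rintro ⟨⟨i, j⟩, ⟨k, l⟩⟩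
  simp only [r0]
  have h1 : i - l + J0 (k + j - i) + (l - J0 (k + j - i)) - (k + j) = -(k + j - i) := by ring
  rw [h1, J0_neg]
  refine Prod.ext (Prod.ext ?_ ?_) (Prod.ext ?_ ?_) <;> ring

lemma r0_braid : ∀ p, yb12 r0 (yb23 r0 (yb12 r0 p)) = yb23 r0 (yb12 r0 (yb23 r0 p)) := by
  rintro ⟨⟨i, j⟩, ⟨k, l⟩, ⟨m, n⟩⟩
  simp only [yb12, yb23, r0]
  ring_nf

lemma r0_sigma_inj (x : ZMod 6 × ZMod 6) : Function.Injective (fun y => (r0 (x, y)).1) := by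
  rintro ⟨k, l⟩ ⟨k', l'⟩ h
  simp only [r0] at h
  obtain ⟨h1, h2⟩ := Prod.mk.injEq .. ▸ h
  have hk : k = k' := add_right_cancel h1
  subst hk
  rw [sub_left_inj] at h2
  exact Prod.ext rfl h2

lemma r0_gamma_inj (y : ZMod 6 × ZMod 6) : Function.Injective (fun x => (r0 (x, y)).2) := by
  rintro ⟨i, j⟩ ⟨i', j'⟩ h
  obtain ⟨k, l⟩ := y
  simp only [r0] at h
  obtain ⟨h1, h2⟩ := Prod.mk.injEq .. ▸ h
  -- h1 : i - l + J0 (k + j - i) = i' - l + J0 (k + j - i')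
  -- h2 : j + J0 (k + j - i) = j' + J0 (k + j - i')
  have hD : k + j - i = k + j' - i' := by
    have := congrArg₂ (fun a b => b - a) h1 h2
    -- (j + J D) - (i - l + J D) = (j' + J D') - (i' - l + J D')
    have h3 : j - i + l = j' - i' + l := by linear_combination this
    linear_combination h3
  rw [hD] at h1 h2
  have hi : i = i' := by linear_combination h1
  have hj : j = j' := by linear_combination h2
  exact Prod.ext hi hj

lemma r0_irretract : ∀ x y : ZMod 6 × ZMod 6,
    (∀ z, (r0 (x, z)).1 = (r0 (y, z)).1) → x = y := by
  rintro ⟨i, j⟩ ⟨i', j'⟩ h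
  have h0 := h (0, 0)
  simp only [r0] at h0
  obtain ⟨h1, -⟩ := Prod.mk.injEq .. ▸ h0
  have hj : j = j' := by linear_combination h1
  subst hj
  have h2 := h (i - j, 0)
  simp only [r0] at h2
  obtain ⟨-, h3⟩ := Prod.mk.injEq .. ▸ h2
  have h4 : i - j + j - i = 0 := by ring
  rw [h4] at h3
  have h5 : J0 (i - j + j - i') = 1 := by
    have h6 : J0 0 = J0 (i - j + j - i') := by simpa using h3
    rw [← h6]; rfl
  rw [J0_eq_one_iff] at h5
  have : i = i' := by linear_combination h5
  exact Prod.ext this rfl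

/-! ### The two-element quotient solution -/

def s2 : (ZMod 2 × ZMod 2) → (ZMod 2 × ZMod 2) := fun p => (p.2 + 1, p.1 + 1)

def f0 : ZMod 6 × ZMod 6 → ZMod 2 := fun p => ZMod.castHom (by norm_num : (2:ℕ) ∣ 6) (ZMod 2) p.2

lemma s2_yb : IsYBSolution s2 := by
  have hs : ∀ x : ZMod 2, Function.Injective fun y => (s2 (x, y)).1 := by decide
  have hg : ∀ y : ZMod 2, Function.Injective fun x => (s2 (x, y)).2 := by decide
  refine ⟨by decide, fun x => (Finite.injective_iff_bijective).mp (hs x),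
    fun y => (Finite.injective_iff_bijective).mp (hg y), funext fun p => ?_⟩
  revert p; decide

lemma f0_hom : IsSolHom r0 s2 f0 := by
  rintro ⟨i, j⟩ ⟨k, l⟩
  show f0 (k + j, l - J0 (k + j - i)) = f0 (k, l) + 1
  show (ZMod.castHom _ (ZMod 2)) (l - J0 (k + j - i)) = (ZMod.castHom _ (ZMod 2)) l + 1
  rw [map_sub]
  have hcast : (ZMod.castHom (by norm_num : (2:ℕ) ∣ 6) (ZMod 2)) (J0 (k + j - i)) = 1 := by
    unfold J0; split <;> decide
  rw [hcast, sub_eq_add_neg, show (-1 : ZMod 2) = 1 from rfl, add_comm]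

lemma f0_surj : Function.Surjective f0 := by decide

/-! ### Reachability for indecomposability -/

noncomputable def sigmaPerm (x : ZMod 6 × ZMod 6) : Equiv.Perm (ZMod 6 × ZMod 6) :=
  Equiv.ofBijective _ ((Finite.injective_iff_bijective).mp (r0_sigma_inj x))

lemma sigmaPerm_mem (x : ZMod 6 × ZMod 6) : sigmaPerm x ∈ permGroup r0 :=
  Subgroup.subset_closure ⟨x, fun y => rfl⟩

def Reach (z : ZMod 6 × ZMod 6) : Prop := ∃ g ∈ permGroup r0, g (0, 0) = z

lemma reach_step {z : ZMod 6 × ZMod 6} (h : Reach z) (t : ZMod 6) :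
    Reach (z.1 + t, z.2 - 1) := by
  obtain ⟨g, hg, hg0⟩ := h
  refine ⟨sigmaPerm (z.1 + t, t) * g, mul_mem (sigmaPerm_mem _) hg, ?_⟩
  have h1 : (sigmaPerm (z.1 + t, t) * g) (0, 0) = (r0 ((z.1 + t, t), z)).1 := by
    rw [Equiv.Perm.mul_apply, hg0]; rfl
  rw [h1]
  show (z.1 + t, z.2 - J0 (z.1 + t - (z.1 + t))) = _
  rw [sub_self]
  rfl

lemma reach_all : ∀ z : ZMod 6 × ZMod 6, Reach z := by
  have h0 : Reach (0, 0) := ⟨1, one_mem _, rfl⟩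
  have h1 : ∀ k, Reach (k, -1) := fun k => by simpa using reach_step h0 k
  have h2 : ∀ k, Reach (k, -2) := fun k => by
    have := reach_step (h1 0) k
    simpa [show (-1 - 1 : ZMod 6) = -2 by decide] using this
  have h3 : ∀ k, Reach (k, -3) := fun k => by
    have := reach_step (h2 0) k
    simpa [show (-2 - 1 : ZMod 6) = -3 by decide] using this
  have h4 : ∀ k, Reach (k, -4) := fun k => by
    have := reach_step (h3 0) k
    simpa [show (-3 - 1 : ZMod 6) = -4 by decide] using this
  have h5 : ∀ k, Reach (k, -5) := fun k => by
    have := reach_step (h4 0) k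
    simpa [show (-4 - 1 : ZMod 6) = -5 by decide] using this
  have h6 : ∀ k, Reach (k, 0) := fun k => by
    have := reach_step (h5 0) k
    simpa [show (-5 - 1 : ZMod 6) = 0 by decide] using this
  rintro ⟨k, l⟩
  have hl : l = 0 ∨ l = -1 ∨ l = -2 ∨ l = -3 ∨ l = -4 ∨ l = -5 := by revert l; decide
  rcases hl with h | h | h | h | h | h <;> subst h
  exacts [h6 k, h1 k, h2 k, h3 k, h4 k, h5 k]

lemma r0_indec : IsIndecomposable r0 := by
  intro x y
  obtain ⟨gx, hgx, hgx0⟩ := reach_all x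
  obtain ⟨gy, hgy, hgy0⟩ := reach_all y
  refine ⟨gy * gx⁻¹, mul_mem hgy (inv_mem hgx), ?_⟩
  rw [Equiv.Perm.mul_apply, ← hgx0, Equiv.Perm.inv_def, Equiv.symm_apply_apply, hgy0]

/-- Remark `exnonsimple`: for `n = 6`, `j₀ = 1` and `j_i = 3` for
`i ≠ 0`, the resulting solution on `(ℤ/(6))²` is indecomposable and
irretractable but not simple: it maps onto a solution of cardinality `2`. -/
theorem indecomposable_irretractable_not_simple_card36
    (J : ZMod 6 → ZMod 6)
    (hJ : ∀ i : ZMod 6, J i = if i = 0 then 1 else 3)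
    (σ : ZMod 6 × ZMod 6 → ZMod 6 × ZMod 6 → ZMod 6 × ZMod 6)
    (hσ : ∀ i j k l : ZMod 6, σ (i, j) (k, l) = (k + j, l - J (k + j - i)))
    (r : (ZMod 6 × ZMod 6) × (ZMod 6 × ZMod 6) → (ZMod 6 × ZMod 6) × (ZMod 6 × ZMod 6))
    (hr : ∀ x y : ZMod 6 × ZMod 6,
      (r (x, y)).1 = σ x y ∧ σ (σ x y) ((r (x, y)).2) = x) :
    IsYBSolution r ∧ IsIndecomposable r ∧ IsIrretractable r ∧
    ¬ IsSimpleSolution r ∧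
    ∃ (Y : Type) (s : Y × Y → Y × Y), IsYBSolution s ∧ Nat.card Y = 2 ∧
      ∃ f : ZMod 6 × ZMod 6 → Y, Function.Surjective f ∧ IsSolHom r s f := by
  have hJ0 : J = J0 := funext fun i => hJ i
  have hσ0 : ∀ x y, σ x y = (r0 (x, y)).1 := by
    rintro ⟨i, j⟩ ⟨k, l⟩
    rw [hσ, hJ0]; rfl
  have σinj : ∀ u, Function.Injective (σ u) := by
    intro u
    have h : σ u = fun y => (r0 (u, y)).1 := funext fun y => hσ0 u y
    rw [h]; exact r0_sigma_inj u
  have hr2 : ∀ x y, (r (x, y)).2 = (r0 (x, y)).2 := by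
    intro x y
    apply σinj (σ x y)
    rw [(hr x y).2, hσ0 x y, hσ0 ((r0 (x, y)).1) ((r0 (x, y)).2)]
    exact (congrArg Prod.fst (r0_invol (x, y))).symm
  have hrr : r = r0 := funext fun p =>
    Prod.ext (((hr p.1 p.2).1).trans (hσ0 p.1 p.2)) (hr2 p.1 p.2)
  subst hrr
  refine ⟨⟨r0_invol, fun x => (Finite.injective_iff_bijective).mp (r0_sigma_inj x),
      fun y => (Finite.injective_iff_bijective).mp (r0_gamma_inj y),
      funext fun p => r0_braid p⟩, r0_indec, r0_irretract, ?_,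
      ⟨ZMod 2, s2, s2_yb, ?_, f0, f0_surj, f0_hom⟩⟩
  · rintro ⟨-, h⟩
    rcases h (ZMod 2) s2 s2_yb f0 f0_surj f0_hom with hb | hsub
    · have h2 : ((0, 0) : ZMod 6 × ZMod 6) = (0, 2) := hb.1 (by decide)
      exact absurd h2 (by decide)
    · exact absurd (@Subsingleton.elim (ZMod 2) hsub 0 1) (by decide)
  · rw [Nat.card_eq_fintype_card]; rfl
end

section
/- Let p be a prime number, let X = ℤ/(p) × ℤ/(p), and let (X,r) be an indecomposable and irretractable solution of the YBE such that r((i,j),(k,l)) = (σ_{(i,j)}(k,l), σ_{σ_{(i,j)}(k,l)}⁻¹(i,j)) with σ_{(i,j)}(k,l) = (σ_j(k), d_{i,σ_j(k)}(l)) for some families of permutations σ_j and d_{i,k} of ℤ/(p). Let F = ⟨σ_j : j ∈ ℤ/(p)⟩ ≤ Sym(ℤ/(p)) and W = ⟨d_{i,k} : i,k ∈ ℤ/(p)⟩ ≤ Sym(ℤ/(p)). Then F contains a normal subgroup A of order p that acts transitively on ℤ/(p), the quotient F/A is cyclic of order not divisible by p, and likewise W contains a normal subgroup A' of order p that acts transitively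 on ℤ/(p) with W/A' cyclic of order not divisible by p. -/
open Function

namespace YBAux

variable (p : ℕ) [Fact p.Prime]

/-- The subgroup of permutations that are affine in the coordinate `m`. -/
def Aff (m : ZMod p ≃ ZMod p) : Subgroup (Equiv.Perm (ZMod p)) where
  carrier := {g | ∃ s : (ZMod p)ˣ, ∃ t : ZMod p, ∀ x, m (g x) = s * m x + t}
  one_mem' := ⟨1, 0, fun x => by simp⟩
  mul_mem' := by
    rintro g h ⟨s, t, hg⟩ ⟨s', t', hh⟩
    refine ⟨s * s', (s : ZMod p) * t' + t, fun x => ?_⟩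
    have : (g * h) x = g (h x) := rfl
    rw [this, hg, hh]; push_cast; ring
  inv_mem' := by
    rintro g ⟨s, t, hg⟩
    refine ⟨s⁻¹, -((s⁻¹ : (ZMod p)ˣ) : ZMod p) * t, fun x => ?_⟩
    have hx : m x = s * m (g⁻¹ x) + t := by
      conv_lhs => rw [show x = g (g⁻¹ x) by simp]
      exact hg _
    have : ((s⁻¹ : (ZMod p)ˣ) : ZMod p) * (m x) = (m (g⁻¹ x)) + ((s⁻¹ : (ZMod p)ˣ) : ZMod p) * t := by
      rw [hx, mul_add, ← mul_assoc, Units.inv_mul, one_mul]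
    linear_combination -this

lemma aff_unique (m : ZMod p ≃ ZMod p) {g : Equiv.Perm (ZMod p)} {s s' : (ZMod p)ˣ} {t t' : ZMod p}
    (h : ∀ x, m (g x) = s * m x + t) (h' : ∀ x, m (g x) = s' * m x + t') : s = s' ∧ t = t' := by
  have h0 := (h (m.symm 0)).symm.trans (h' (m.symm 0))
  simp at h0
  have h1 := (h (m.symm 1)).symm.trans (h' (m.symm 1))
  simp [h0] at h1
  exact ⟨Units.ext h1, h0⟩

/-- The multiplier of an affine permutation. -/
noncomputable def mult (m : ZMod p ≃ ZMod p) : (Aff p m) →* (ZMod p)ˣ where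
  toFun g := g.2.choose
  map_one' := by
    obtain ⟨t, ht⟩ := (1 : Aff p m).2.choose_spec
    exact (aff_unique p m ht (fun x => by simp : ∀ x, m ((1 : Equiv.Perm (ZMod p)) x) = (1 : (ZMod p)ˣ) * m x + 0)).1
  map_mul' := by
    intro g h
    obtain ⟨t, ht⟩ := (g * h).2.choose_spec
    obtain ⟨tg, htg⟩ := g.2.choose_spec
    obtain ⟨th, hth⟩ := h.2.choose_spec
    refine (aff_unique p m ht (fun x => ?_ : ∀ x, m (((g : Equiv.Perm (ZMod p)) * h) x)
      = (g.2.choose * h.2.choose) * m x + ((g.2.choose : ZMod p) * th + tg))).1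
    have : ((g : Equiv.Perm (ZMod p)) * h) x = (g : Equiv.Perm (ZMod p)) ((h : Equiv.Perm (ZMod p)) x) := rfl
    rw [this, htg, hth]; push_cast; ring

lemma mult_spec (m : ZMod p ≃ ZMod p) (g : Aff p m) :
    ∃ t, ∀ x, m ((g : Equiv.Perm (ZMod p)) x) = (mult p m g) * m x + t :=
  g.2.choose_spec

theorem aff_main (m : ZMod p ≃ ZMod p) (G : Subgroup (Equiv.Perm (ZMod p)))
    (hG : G ≤ Aff p m)
    (htrans : ∀ x y : ZMod p, ∃ g : ↥G, (g : Equiv.Perm (ZMod p)) x = y) :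
    ∃ A : Subgroup ↥G, ∃ hA : A.Normal,
      Nat.card ↥A = p ∧
      (∀ x y : ZMod p, ∃ g : ↥G, g ∈ A ∧ (g : Equiv.Perm (ZMod p)) x = y) ∧
      (haveI := hA; IsCyclic (↥G ⧸ A)) ∧
      ¬ (p ∣ Nat.card (↥G ⧸ A)) := by
  classical
  have hp : p.Prime := Fact.out
  set μ : ↥G →* (ZMod p)ˣ := (mult p m).comp (Subgroup.inclusion hG) with hμ
  refine ⟨μ.ker, μ.normal_ker, ?_⟩
  -- translation data for kernel elements
  have ker_spec : ∀ a : ↥G, a ∈ μ.ker → ∀ x, m ((a : Equiv.Perm (ZMod p)) x)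
      = m x + m ((a : Equiv.Perm (ZMod p)) (m.symm 0)) := by
    intro a ha x
    obtain ⟨t, ht⟩ := mult_spec p m (Subgroup.inclusion hG a)
    have hμa : μ a = 1 := ha
    rw [hμ] at hμa
    simp only [MonoidHom.comp_apply] at hμa
    have h1 : ∀ x, m ((a : Equiv.Perm (ZMod p)) x) = m x + t := by
      intro x
      have := ht x
      rw [hμa] at this
      simpa using this
    have h0 := h1 (m.symm 0)
    simp at h0
    rw [h1 x, h0]
  -- the translation homomorphism on the kernel
  set T : μ.ker →* Multiplicative (ZMod p) :=
    { toFun := fun a => Multiplicative.ofAdd (m (((a : ↥G) : Equiv.Perm (ZMod p)) (m.symm 0)))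
      map_one' := by simp
      map_mul' := by
        intro a b
        have ha := ker_spec (a : ↥G) a.2
        have hb := ker_spec (b : ↥G) b.2
        have : (((a * b : μ.ker) : ↥G) : Equiv.Perm (ZMod p)) (m.symm 0)
            = ((a : ↥G) : Equiv.Perm (ZMod p)) (((b : ↥G) : Equiv.Perm (ZMod p)) (m.symm 0)) := rfl
        simp only [this]
        rw [← ofAdd_add]
        congr 1
        rw [ha, hb]
        simp
        ring } with hT
  have Tinj : Function.Injective T := by
    intro a b hab
    have ha := ker_spec (a : ↥G) a.2
    have hb := ker_spec (b : ↥G) b.2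
    have hteq : m (((a : ↥G) : Equiv.Perm (ZMod p)) (m.symm 0))
        = m (((b : ↥G) : Equiv.Perm (ZMod p)) (m.symm 0)) := by
      simpa [hT] using hab
    have : ∀ x, ((a : ↥G) : Equiv.Perm (ZMod p)) x = ((b : ↥G) : Equiv.Perm (ZMod p)) x := by
      intro x
      apply m.injective
      rw [ha x, hb x, hteq]
    refine Subtype.ext (Subtype.ext (Equiv.ext this))
  have hcard_mult : Nat.card (Multiplicative (ZMod p)) = p :=
    (Nat.card_congr (Multiplicative.ofAdd (α := ZMod p)).symm).trans (Nat.card_zmod p)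
  -- |ker| divides p
  have hAdvd : Nat.card ↥μ.ker ∣ p := by
    have e := MonoidHom.ofInjective Tinj
    calc Nat.card ↥μ.ker = Nat.card ↥T.range := Nat.card_congr e.toEquiv
    _ ∣ Nat.card (Multiplicative (ZMod p)) := Subgroup.card_subgroup_dvd_card T.range
    _ = p := hcard_mult
  -- p divides |G| via orbit-stabilizer
  have hpG : p ∣ Nat.card ↥G := by
    have horb : MulAction.orbit ↥G (0 : ZMod p) = Set.univ := by
      ext y
      simp only [Set.mem_univ, iff_true, MulAction.mem_orbit_iff]
      obtain ⟨g, hg⟩ := htrans 0 y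
      exact ⟨g, hg⟩
    have e := MulAction.orbitEquivQuotientStabilizer ↥G (0 : ZMod p)
    have hcard : Nat.card (↥G ⧸ MulAction.stabilizer ↥G (0 : ZMod p)) = p := by
      rw [← Nat.card_congr e, horb, Nat.card_congr (Equiv.Set.univ (ZMod p)), Nat.card_zmod]
    rw [Subgroup.card_eq_card_quotient_mul_card_subgroup (MulAction.stabilizer ↥G (0 : ZMod p)), hcard]
    exact Dvd.intro _ rfl
  -- quotient divides p - 1
  have hquot_card : Nat.card (↥G ⧸ μ.ker) ∣ p - 1 := by
    have e := QuotientGroup.quotientKerEquivRange μ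
    rw [Nat.card_congr e.toEquiv]
    have : Nat.card (ZMod p)ˣ = p - 1 := by
      rw [Nat.card_eq_fintype_card, ZMod.card_units_eq_totient, Nat.totient_prime hp]
    calc Nat.card ↥μ.range ∣ Nat.card (ZMod p)ˣ := Subgroup.card_subgroup_dvd_card μ.range
    _ = p - 1 := this
  have hpnotq : ¬ (p ∣ Nat.card (↥G ⧸ μ.ker)) := by
    intro h
    have : p ∣ p - 1 := h.trans hquot_card
    have hlt : p - 1 < p := Nat.sub_lt hp.pos one_pos
    have h2 := hp.two_le
    have hpos : 0 < p - 1 := by omega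
    exact absurd (Nat.le_of_dvd hpos this) (by omega)
  -- |ker| = p
  have hAcard : Nat.card ↥μ.ker = p := by
    have h1 : p ∣ Nat.card (↥G ⧸ μ.ker) * Nat.card ↥μ.ker := by
      rw [← Subgroup.card_eq_card_quotient_mul_card_subgroup]; exact hpG
    have h2 : p ∣ Nat.card ↥μ.ker := ((Nat.Prime.dvd_mul hp).mp h1).resolve_left hpnotq
    exact Nat.dvd_antisymm hAdvd h2
  -- T is bijective, hence the kernel acts transitively
  have Tbij : Function.Bijective T := by
    rw [Nat.bijective_iff_injective_and_card]
    exact ⟨Tinj, hAcard.trans hcard_mult.symm⟩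
  have htransA : ∀ x y : ZMod p, ∃ g : ↥G, g ∈ μ.ker ∧ (g : Equiv.Perm (ZMod p)) x = y := by
    intro x y
    obtain ⟨a, ha⟩ := Tbij.2 (Multiplicative.ofAdd (m y - m x))
    refine ⟨(a : ↥G), a.2, ?_⟩
    apply m.injective
    rw [ker_spec (a : ↥G) a.2 x]
    have : m (((a : ↥G) : Equiv.Perm (ZMod p)) (m.symm 0)) = m y - m x := by
      have := congrArg Multiplicative.toAdd ha
      simpa [hT] using this
    rw [this]; ring
  -- cyclic quotient
  have hcyc : IsCyclic (↥G ⧸ μ.ker) := by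
    have e := QuotientGroup.quotientKerEquivRange μ
    exact isCyclic_of_surjective e.symm.toMonoidHom e.symm.surjective
  exact ⟨hAcard, htransA, hcyc, hpnotq⟩

end YBAux


section K
variable {p : ℕ} [Fact p.Prime] (σ : ZMod p → Equiv.Perm (ZMod p))

theorem Ktheory (w₀ : Equiv.Perm (ZMod p))
    (hR : ∀ j l, σ j * σ l = σ (w₀ l) * σ (w₀⁻¹ j))
    (hσinj : Function.Injective σ)
    (hFtrans : ∀ x y : ZMod p, ∃ f ∈ Subgroup.closure (Set.range σ), f x = y) :
    ∃ (K : Subgroup (Equiv.Perm (ZMod p))) (κ : Equiv.Perm (ZMod p)),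
      κ ∈ K ∧ orderOf κ = p ∧ Nat.card ↥K = p ∧
      (∀ x ∈ K, ∃ e : ZMod p, κ ^ e.val = x) ∧
      (∀ x ∈ K, ∀ z, x z = z → x = 1) ∧
      (∀ x y : ZMod p, ∃ g ∈ K, g x = y) ∧
      (∀ f ∈ Subgroup.closure (Set.range σ), ∀ x, x ∈ K ↔ f * x * f⁻¹ ∈ K) ∧
      (∀ a b, (σ a)⁻¹ * σ b ∈ K) := by
  classical
  have hp : p.Prime := Fact.out
  haveI : Fact (1 < p) := ⟨hp.one_lt⟩
  set Kset : Set (Equiv.Perm (ZMod p)) := {g | ∃ a b, (σ a)⁻¹ * σ b = g} with hKset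
  set K := Subgroup.closure Kset with hK
  have hgen : ∀ a b, (σ a)⁻¹ * σ b ∈ K := fun a b => Subgroup.subset_closure ⟨a, b, rfl⟩
  have hR' : ∀ j l, σ (w₀⁻¹ j) = (σ (w₀ l))⁻¹ * (σ j * σ l) := by
    intro j l; rw [hR j l]; group
  have L1 : ∀ a b l, (σ l)⁻¹ * ((σ a)⁻¹ * σ b) * σ l = (σ (w₀⁻¹ a))⁻¹ * σ (w₀⁻¹ b) := by
    intro a b l; rw [hR' a l, hR' b l]; group
  have L1' : ∀ a b l, σ l * ((σ a)⁻¹ * σ b) * (σ l)⁻¹ = (σ (w₀ a))⁻¹ * σ (w₀ b) := by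
    intro a b l
    have h := L1 (w₀ a) (w₀ b) l
    rw [show w₀⁻¹ (w₀ a) = a from w₀.symm_apply_apply a,
        show w₀⁻¹ (w₀ b) = b from w₀.symm_apply_apply b] at h
    rw [← h]; group
  -- conjugation by σ l preserves K
  have Lconj : ∀ l, ∀ x ∈ K, ((σ l)⁻¹ * x * σ l ∈ K ∧ σ l * x * (σ l)⁻¹ ∈ K) := by
    intro l x hx
    induction hx using Subgroup.closure_induction with
    | mem g hg =>
      obtain ⟨a, b, rfl⟩ := hg
      exact ⟨L1 a b l ▸ hgen _ _, L1' a b l ▸ hgen _ _⟩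
    | one => constructor <;> · simpa using one_mem K
    | mul x y hx hy ihx ihy =>
      constructor
      · have e : (σ l)⁻¹ * (x * y) * σ l = ((σ l)⁻¹ * x * σ l) * ((σ l)⁻¹ * y * σ l) := by group
        rw [e]; exact mul_mem ihx.1 ihy.1
      · have e : σ l * (x * y) * (σ l)⁻¹ = (σ l * x * (σ l)⁻¹) * (σ l * y * (σ l)⁻¹) := by group
        rw [e]; exact mul_mem ihx.2 ihy.2
    | inv x hx ihx =>
      constructor
      · have e : (σ l)⁻¹ * x⁻¹ * σ l = ((σ l)⁻¹ * x * σ l)⁻¹ := by group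
        rw [e]; exact inv_mem ihx.1
      · have e : σ l * x⁻¹ * (σ l)⁻¹ = (σ l * x * (σ l)⁻¹)⁻¹ := by group
        rw [e]; exact inv_mem ihx.2
  -- conjugation by σ l on K does not depend on l
  have Lindep : ∀ x ∈ K, ∀ l l', (σ l)⁻¹ * x * σ l = (σ l')⁻¹ * x * σ l' := by
    intro x hx
    induction hx using Subgroup.closure_induction with
    | mem g hg =>
      obtain ⟨a, b, rfl⟩ := hg
      intro l l'; rw [L1 a b l, L1 a b l']
    | one => intro l l'; group
    | mul x y hx hy ihx ihy =>
      intro l l'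
      have e1 : (σ l)⁻¹ * (x * y) * σ l = ((σ l)⁻¹ * x * σ l) * ((σ l)⁻¹ * y * σ l) := by group
      have e2 : (σ l')⁻¹ * (x * y) * σ l' = ((σ l')⁻¹ * x * σ l') * ((σ l')⁻¹ * y * σ l') := by group
      rw [e1, e2, ihx l l', ihy l l']
    | inv x hx ihx =>
      intro l l'
      have e1 : (σ l)⁻¹ * x⁻¹ * σ l = ((σ l)⁻¹ * x * σ l)⁻¹ := by group
      have e2 : (σ l')⁻¹ * x⁻¹ * σ l' = ((σ l')⁻¹ * x * σ l')⁻¹ := by group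
      rw [e1, e2, ihx l l']
  -- K is commutative
  have Lcomm : ∀ y ∈ K, ∀ x ∈ K, x * y = y * x := by
    intro y hy
    have hgencomm : ∀ a b, ((σ a)⁻¹ * σ b) * y = y * ((σ a)⁻¹ * σ b) := by
      intro a b
      have hz : σ b * y * (σ b)⁻¹ ∈ K := (Lconj b y hy).2
      have h := Lindep _ hz a b
      have h2 : (σ b)⁻¹ * (σ b * y * (σ b)⁻¹) * σ b = y := by group
      rw [h2] at h
      -- h : (σ a)⁻¹ * (σ b * y * (σ b)⁻¹) * σ a = y
      have : ((σ a)⁻¹ * σ b) * y * ((σ a)⁻¹ * σ b)⁻¹ = y := by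
        conv_rhs => rw [← h]
        group
      calc ((σ a)⁻¹ * σ b) * y = (((σ a)⁻¹ * σ b) * y * ((σ a)⁻¹ * σ b)⁻¹) * ((σ a)⁻¹ * σ b) := by group
      _ = y * ((σ a)⁻¹ * σ b) := by rw [this]
    intro x hx
    induction hx using Subgroup.closure_induction with
    | mem g hg => obtain ⟨a, b, rfl⟩ := hg; exact hgencomm a b
    | one => group
    | mul u v hu hv ihu ihv => rw [mul_assoc, ihv, ← mul_assoc, ihu, mul_assoc]
    | inv u hu ihu =>
      calc u⁻¹ * y = u⁻¹ * (y * u) * u⁻¹ := by group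
      _ = u⁻¹ * (u * y) * u⁻¹ := by rw [← ihu]
      _ = y * u⁻¹ := by group
  -- the normalizer fact
  have hFnorm : ∀ f ∈ Subgroup.closure (Set.range σ), ∀ x, x ∈ K ↔ f * x * f⁻¹ ∈ K := by
    have hle : Subgroup.closure (Set.range σ) ≤ Subgroup.normalizer (K : Set (Equiv.Perm (ZMod p))) := by
      rw [Subgroup.closure_le]
      rintro g ⟨j, rfl⟩
      rw [SetLike.mem_coe, Subgroup.mem_normalizer_iff]
      intro x
      constructor
      · intro hx; exact (Lconj j x hx).2
      · intro hx
        have := (Lconj j _ hx).1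
        have e : (σ j)⁻¹ * (σ j * x * (σ j)⁻¹) * σ j = x := by group
        rwa [e] at this
    intro f hf x
    exact Subgroup.mem_normalizer_iff.mp (hle hf) x
  -- K is nontrivial
  have hKnontriv : ∃ g ∈ K, g ≠ (1 : Equiv.Perm (ZMod p)) := by
    refine ⟨(σ 0)⁻¹ * σ 1, hgen 0 1, ?_⟩
    intro h
    have : σ 0 = σ 1 := by
      have := congrArg (fun z => σ 0 * z) h
      simpa [mul_assoc] using this.symm
    exact one_ne_zero (hσinj this).symm
  -- orbits of K all have the same size
  have horb_card : ∀ x y : ZMod p,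
      (MulAction.orbit ↥K x).ncard = (MulAction.orbit ↥K y).ncard := by
    intro x y
    obtain ⟨f, hf, hfx⟩ := hFtrans x y
    have himg : (⇑f '' MulAction.orbit ↥K x) = MulAction.orbit ↥K y := by
      ext z
      constructor
      · rintro ⟨w, ⟨g, rfl⟩, rfl⟩
        refine ⟨⟨f * (g : Equiv.Perm (ZMod p)) * f⁻¹, ((hFnorm f hf _).mp g.2)⟩, ?_⟩
        show (f * (g : Equiv.Perm (ZMod p)) * f⁻¹) y = f ((g : Equiv.Perm (ZMod p)) • x)
        simp only [Equiv.Perm.mul_apply, ← hfx]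
        congr 1
        exact congrArg _ (f.symm_apply_apply x : f⁻¹ (f x) = x)
      · rintro ⟨g, rfl⟩
        rw [Set.mem_image]
        have hmem : f⁻¹ * (g : Equiv.Perm (ZMod p)) * f ∈ K := by
          have := (hFnorm f⁻¹ (inv_mem hf) _).mp g.2
          simpa using this
        refine ⟨(f⁻¹ * (g : Equiv.Perm (ZMod p)) * f) x, ⟨⟨f⁻¹ * (g : Equiv.Perm (ZMod p)) * f, hmem⟩, rfl⟩, ?_⟩
        show f ((f⁻¹ * (g : Equiv.Perm (ZMod p)) * f) x) = (g : Equiv.Perm (ZMod p)) • y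
        simp only [Equiv.Perm.mul_apply, hfx]
        show f (f⁻¹ ((g : Equiv.Perm (ZMod p)) y)) = _
        rw [(show ∀ x, f (f⁻¹ x) = x from f.apply_symm_apply)]
        rfl
    rw [← himg, Set.ncard_image_of_injective _ f.injective]
  -- the common orbit size divides p
  have horbd : (MulAction.orbit ↥K (0 : ZMod p)).ncard ∣ p := by
    haveI : Fintype (MulAction.orbitRel.Quotient ↥K (ZMod p)) := Fintype.ofFinite _
    have e := MulAction.selfEquivSigmaOrbits ↥K (ZMod p)
    have hcards : p = ∑ ω : MulAction.orbitRel.Quotient ↥K (ZMod p),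
        Nat.card ↑(MulAction.orbit ↥K (Quotient.out ω)) := by
      conv_lhs => rw [← Nat.card_zmod p]
      rw [Nat.card_congr e]
      haveI : ∀ ω : MulAction.orbitRel.Quotient ↥K (ZMod p),
          Fintype ↑(MulAction.orbit ↥K (Quotient.out ω)) := fun ω => Fintype.ofFinite _
      rw [Nat.card_eq_fintype_card, Fintype.card_sigma]
      exact Finset.sum_congr rfl fun ω _ => (Nat.card_eq_fintype_card).symm
    have hconst : ∀ ω : MulAction.orbitRel.Quotient ↥K (ZMod p),
        Nat.card ↑(MulAction.orbit ↥K (Quotient.out ω))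
          = (MulAction.orbit ↥K (0 : ZMod p)).ncard := by
      intro ω
      rw [Nat.card_coe_set_eq]
      exact horb_card _ _
    rw [Finset.sum_congr rfl (fun ω _ => hconst ω), Finset.sum_const, smul_eq_mul] at hcards
    exact ⟨Finset.univ.card, hcards.trans (Nat.mul_comm _ _)⟩
  -- the orbit size is not one
  have horb_ne_one : (MulAction.orbit ↥K (0 : ZMod p)).ncard ≠ 1 := by
    obtain ⟨g, hgK, hg1⟩ := hKnontriv
    obtain ⟨z, hz⟩ : ∃ z, g z ≠ z := by
      by_contra h
      push_neg at h
      exact hg1 (Equiv.ext h)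
    intro h1
    have := horb_card (0 : ZMod p) z
    rw [h1] at this
    obtain ⟨a, ha⟩ := Set.ncard_eq_one.mp this.symm
    have hz1 : z ∈ MulAction.orbit ↥K z := MulAction.mem_orbit_self z
    have hz2 : g z ∈ MulAction.orbit ↥K z := ⟨⟨g, hgK⟩, rfl⟩
    rw [ha] at hz1 hz2
    exact hz (hz2.trans hz1.symm)
  have horbp : ∀ x : ZMod p, (MulAction.orbit ↥K x).ncard = p := by
    intro x
    rw [horb_card x 0]
    exact ((Nat.Prime.eq_one_or_self_of_dvd hp _ horbd).resolve_left horb_ne_one)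
  -- K is transitive
  have hKtrans : ∀ x y : ZMod p, ∃ g ∈ K, g x = y := by
    intro x y
    have : MulAction.orbit ↥K x = Set.univ := by
      apply Set.eq_of_subset_of_ncard_le (Set.subset_univ _)
      rw [Set.ncard_univ, Nat.card_zmod, horbp x]
    have hy : y ∈ MulAction.orbit ↥K x := by rw [this]; trivial
    obtain ⟨g, hg⟩ := hy
    exact ⟨(g : Equiv.Perm (ZMod p)), g.2, hg⟩
  -- K acts freely
  have hKfree : ∀ x ∈ K, ∀ z, x z = z → x = 1 := by
    intro x hx z hz
    ext y
    obtain ⟨g, hgK, hgz⟩ := hKtrans z y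
    have : x (g z) = g (x z) := by
      have := Lcomm _ hx _ hgK
      have := congrArg (fun q => (q : Equiv.Perm (ZMod p)) z) this
      simpa [Equiv.Perm.mul_apply] using this.symm
    rw [hgz] at this
    rw [this, hz, hgz]
    rfl
  -- K has cardinality p
  have hKcard : Nat.card ↥K = p := by
    have hbij : Function.Bijective (fun g : ↥K => (g : Equiv.Perm (ZMod p)) 0) := by
      constructor
      · intro g h hgh
        have hgh' : (g : Equiv.Perm (ZMod p)) 0 = (h : Equiv.Perm (ZMod p)) 0 := hgh
        have : ((h⁻¹ * g : ↥K) : Equiv.Perm (ZMod p)) 0 = 0 := by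
          show ((h : Equiv.Perm (ZMod p))⁻¹ * (g : Equiv.Perm (ZMod p))) 0 = 0
          rw [Equiv.Perm.mul_apply, hgh']
          exact (h : Equiv.Perm (ZMod p)).symm_apply_apply _
        have h1 : (h⁻¹ * g : ↥K) = 1 := by
          have := hKfree _ (h⁻¹ * g).2 0 this
          exact Subtype.ext this
        have := congrArg (fun q => h * q) h1
        simpa using this
      · intro y
        obtain ⟨g, hgK, hg⟩ := hKtrans 0 y
        exact ⟨⟨g, hgK⟩, hg⟩
    rw [Nat.card_congr (Equiv.ofBijective _ hbij), Nat.card_zmod]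
  -- K is cyclic of prime order; get a generator
  haveI : IsCyclic ↥K := isCyclic_of_prime_card hKcard
  obtain ⟨kap, hkap⟩ := IsCyclic.exists_generator (α := ↥K)
  have hκord : orderOf ((kap : Equiv.Perm (ZMod p))) = p := by
    have h1 : orderOf (K.subtype kap) = orderOf kap := orderOf_injective _ K.subtype_injective kap
    have h2 : orderOf kap = p := by rw [orderOf_eq_card_of_forall_mem_zpowers hkap, hKcard]
    exact h1.trans h2
  have hκpow : ∀ x ∈ K, ∃ e : ZMod p, (kap : Equiv.Perm (ZMod p)) ^ e.val = x := by
    intro x hx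
    obtain ⟨n, hn⟩ := Subgroup.mem_zpowers_iff.mp (hkap ⟨x, hx⟩)
    refine ⟨((n : ZMod p)), ?_⟩
    have : (kap : Equiv.Perm (ZMod p)) ^ (n : ℤ) = x := by
      have := congrArg (fun q => ((q : ↥K) : Equiv.Perm (ZMod p))) hn
      simpa using this
    rw [← this]
    rw [show ((kap : Equiv.Perm (ZMod p)) ^ ((n : ZMod p)).val : Equiv.Perm (ZMod p))
        = (kap : Equiv.Perm (ZMod p)) ^ (((n : ZMod p)).val : ℤ) from (zpow_natCast _ _).symm]
    rw [zpow_eq_zpow_iff_modEq, hκord]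
    have : ((((n : ZMod p)).val : ℤ) : ZMod p) = ((n : ZMod p)) := by
      push_cast [ZMod.natCast_val]
      simp [ZMod.intCast_cast]
    rw [← ZMod.intCast_eq_intCast_iff]
    rw [this]
  exact ⟨K, (kap : Equiv.Perm (ZMod p)), kap.2, hκord, hKcard, hκpow, hKfree, hKtrans, hFnorm, hgen⟩

end K

/-- for an indecomposable irretractable solution on `(ℤ/(p))²` of
the special product form, both `F = ⟨σ_j⟩` and `W = ⟨d_{i,k}⟩` have a normal
subgroup of order `p` acting transitively on `ℤ/(p)`, with cyclic quotient of
order prime to `p`. -/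
theorem F_and_W_abelian_by_cyclic (p : ℕ) [Fact p.Prime]
    (σ : ZMod p → Equiv.Perm (ZMod p)) (d : ZMod p → ZMod p → Equiv.Perm (ZMod p))
    (r : (ZMod p × ZMod p) × (ZMod p × ZMod p) → (ZMod p × ZMod p) × (ZMod p × ZMod p))
    (hr : ∀ i j k l : ZMod p,
      r ((i, j), (k, l)) = ((σ j k, d i (σ j k) l),
        ((σ (d i (σ j k) l))⁻¹ i, (d (σ j k) i)⁻¹ j)))
    (hsol : IsYBSolution r) (hind : IsIndecomposable r) (hirr : IsIrretractable r) :
    (∃ A : Subgroup ↥(Subgroup.closure (Set.range σ)), ∃ hA : A.Normal,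
      Nat.card ↥A = p ∧
      (∀ x y : ZMod p, ∃ g : ↥(Subgroup.closure (Set.range σ)),
        g ∈ A ∧ (g : Equiv.Perm (ZMod p)) x = y) ∧
      (haveI := hA; IsCyclic (↥(Subgroup.closure (Set.range σ)) ⧸ A)) ∧
      ¬ (p ∣ Nat.card (↥(Subgroup.closure (Set.range σ)) ⧸ A))) ∧
    (∃ A' : Subgroup ↥(Subgroup.closure {g : Equiv.Perm (ZMod p) | ∃ i k, d i k = g}),
      ∃ hA' : A'.Normal,
      Nat.card ↥A' = p ∧
      (∀ x y : ZMod p,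
        ∃ g : ↥(Subgroup.closure {g : Equiv.Perm (ZMod p) | ∃ i k, d i k = g}),
        g ∈ A' ∧ (g : Equiv.Perm (ZMod p)) x = y) ∧
      (haveI := hA';
        IsCyclic (↥(Subgroup.closure {g : Equiv.Perm (ZMod p) | ∃ i k, d i k = g}) ⧸ A')) ∧
      ¬ (p ∣ Nat.card
          (↥(Subgroup.closure {g : Equiv.Perm (ZMod p) | ∃ i k, d i k = g}) ⧸ A'))) := by
  classical
  have hp : p.Prime := Fact.out
  haveI : Fact (1 < p) := ⟨hp.one_lt⟩
  -- σ is injective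
  have hσinj : Function.Injective σ := by
    intro a b hab
    have h := hirr (0, a) (0, b) ?_
    · exact (Prod.mk.injEq _ _ _ _ ▸ h).2
    · intro z
      have h1 := hr 0 a z.1 z.2
      have h2 := hr 0 b z.1 z.2
      rw [show ((0,a),(z.1,z.2)) = (((0:ZMod p),a),z) from rfl] at h1
      rw [show ((0,b),(z.1,z.2)) = (((0:ZMod p),b),z) from rfl] at h2
      rw [h1, h2, hab]
  -- the key relation E1'
  have E1 : ∀ i j k l m : ZMod p,
      σ (d i (σ j k) l) (σ ((d (σ j k) i)⁻¹ j) m) = σ j (σ l m) := by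
    intro i j k l m
    have h := congrFun hsol.braid ((i,j),(k,l),(m,0))
    simp only [Function.comp_apply, yb12, yb23, hr, Prod.mk.injEq] at h
    exact h.1.1
  have E1' : ∀ i a j l : ZMod p, σ j * σ l = σ (d i a l) * σ ((d a i)⁻¹ j) := by
    intro i a j l
    ext m
    have h := E1 i j ((σ j)⁻¹ a) l m
    rw [(show ∀ x, σ j ((σ j)⁻¹ x) = x from (σ j).apply_symm_apply)] at h
    simpa [Equiv.Perm.mul_apply] using h.symm
  -- structure of elements of the permutation group
  have hstruct : ∀ g ∈ permGroup r, ∃ f : Equiv.Perm (ZMod p),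
      f ∈ Subgroup.closure (Set.range σ) ∧ ∀ k : ZMod p, ∃ w : Equiv.Perm (ZMod p),
        w ∈ Subgroup.closure {g : Equiv.Perm (ZMod p) | ∃ i k, d i k = g} ∧
        ∀ l : ZMod p, g (k, l) = (f k, w l) := by
    intro g hg
    induction hg using Subgroup.closure_induction with
    | mem g hgm =>
      obtain ⟨⟨i, j⟩, hgij⟩ := hgm
      refine ⟨σ j, Subgroup.subset_closure ⟨j, rfl⟩, fun k => ?_⟩
      refine ⟨d i (σ j k), Subgroup.subset_closure ⟨i, σ j k, rfl⟩, fun l => ?_⟩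
      have := hgij (k, l)
      rw [this, hr]
    | one => exact ⟨1, one_mem _, fun k => ⟨1, one_mem _, fun l => rfl⟩⟩
    | mul g h hgmem hhmem ihg ihh =>
      obtain ⟨fg, hfg, hkg⟩ := ihg
      obtain ⟨fh, hfh, hkh⟩ := ihh
      refine ⟨fg * fh, mul_mem hfg hfh, fun k => ?_⟩
      obtain ⟨wh, hwh, hwhl⟩ := hkh k
      obtain ⟨wg, hwg, hwgl⟩ := hkg (fh k)
      refine ⟨wg * wh, mul_mem hwg hwh, fun l => ?_⟩
      rw [Equiv.Perm.mul_apply, hwhl l, hwgl (wh l)]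
      rfl
    | inv g hgmem ihg =>
      obtain ⟨f, hf, hk⟩ := ihg
      refine ⟨f⁻¹, inv_mem hf, fun k => ?_⟩
      obtain ⟨w, hw, hwl⟩ := hk (f⁻¹ k)
      refine ⟨w⁻¹, inv_mem hw, fun l => ?_⟩
      have : g (f⁻¹ k, w⁻¹ l) = (k, l) := by
        rw [hwl (w⁻¹ l), (show ∀ x, f (f⁻¹ x) = x from f.apply_symm_apply), (show ∀ x, w (w⁻¹ x) = x from w.apply_symm_apply)]
      calc g⁻¹ (k, l) = g⁻¹ (g (f⁻¹ k, w⁻¹ l)) := by rw [this]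
      _ = (f⁻¹ k, w⁻¹ l) := g.symm_apply_apply _
  -- transitivity of F and W
  have hFtrans : ∀ x y : ZMod p, ∃ f ∈ Subgroup.closure (Set.range σ), f x = y := by
    intro x y
    obtain ⟨g, hg, hgxy⟩ := hind (x, 0) (y, 0)
    obtain ⟨f, hf, hk⟩ := hstruct g hg
    obtain ⟨w, _, hwl⟩ := hk x
    refine ⟨f, hf, ?_⟩
    have := hwl 0
    rw [hgxy] at this
    exact ((Prod.mk.injEq _ _ _ _ ▸ this).1).symm
  have hWtrans : ∀ x y : ZMod p,
      ∃ g : ↥(Subgroup.closure {g : Equiv.Perm (ZMod p) | ∃ i k, d i k = g}),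
        (g : Equiv.Perm (ZMod p)) x = y := by
    intro x y
    obtain ⟨g, hg, hgxy⟩ := hind (0, x) (0, y)
    obtain ⟨f, hf, hk⟩ := hstruct g hg
    obtain ⟨w, hw, hwl⟩ := hk 0
    refine ⟨⟨w, hw⟩, ?_⟩
    have := hwl x
    rw [hgxy] at this
    exact ((Prod.mk.injEq _ _ _ _ ▸ this).2).symm
  have hFtrans' : ∀ x y : ZMod p, ∃ g : ↥(Subgroup.closure (Set.range σ)),
      (g : Equiv.Perm (ZMod p)) x = y := by
    intro x y
    obtain ⟨f, hf, hfx⟩ := hFtrans x y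
    exact ⟨⟨f, hf⟩, hfx⟩
  -- apply the K-theory
  obtain ⟨K, κ, hκK, hκord, hKcard, hκpow, hKfree, hKtrans, hFnorm, hgenK⟩ :=
    Ktheory σ (d 0 0) (fun j l => E1' 0 0 j l) hσinj hFtrans
  -- power arithmetic for κ
  have ηinj : ∀ a b : ZMod p, κ ^ a.val = κ ^ b.val → a = b := by
    intro a b h
    have := pow_eq_pow_iff_modEq.mp h
    rw [hκord] at this
    apply ZMod.val_injective p
    calc a.val = a.val % p := (Nat.mod_eq_of_lt a.val_lt).symm
    _ = b.val % p := this
    _ = b.val := Nat.mod_eq_of_lt b.val_lt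
  have ηadd : ∀ a b : ZMod p, κ ^ (a + b).val = κ ^ a.val * κ ^ b.val := by
    intro a b
    rw [← pow_add]
    rw [pow_eq_pow_iff_modEq, hκord, ZMod.val_add]
    exact Nat.mod_modEq _ _
  have ηconj : ∀ (g : Equiv.Perm (ZMod p)) (c : ZMod p), g * κ * g⁻¹ = κ ^ c.val →
      ∀ e : ZMod p, g * κ ^ e.val * g⁻¹ = κ ^ (c * e).val := by
    intro g c hc e
    rw [← conj_pow, hc, ← pow_mul]
    rw [pow_eq_pow_iff_modEq, hκord, ZMod.val_mul]
    exact (Nat.mod_modEq _ _).symm.trans (by rw [Nat.mul_comm])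
  -- ===================  W side  ===================
  set τ := σ 0 with hτ
  have hτF : τ ∈ Subgroup.closure (Set.range σ) := Subgroup.subset_closure ⟨0, rfl⟩
  have hτκK : τ⁻¹ * κ * τ ∈ K := by
    have := (hFnorm τ⁻¹ (inv_mem hτF) κ).mp hκK
    simpa using this
  obtain ⟨c', hc'⟩ := hκpow _ hτκK
  have hc'0 : c' ≠ 0 := by
    intro h
    rw [h] at hc'
    simp only [ZMod.val_zero, pow_zero] at hc'
    have : κ = 1 := by
      have := hc'
      calc κ = τ * (τ⁻¹ * κ * τ) * τ⁻¹ := by group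
      _ = τ * 1 * τ⁻¹ := by rw [this]
      _ = 1 := by group
    rw [this] at hκord
    simp at hκord
    have h2 := hp.one_lt
    omega
  have ηconjτ : ∀ e : ZMod p, τ⁻¹ * κ ^ e.val * τ = κ ^ (c' * e).val := by
    intro e
    have h : τ⁻¹ * κ * τ⁻¹⁻¹ = κ ^ c'.val := by rw [inv_inv]; exact hc'.symm
    have := ηconj τ⁻¹ c' h e
    rwa [inv_inv] at this
  -- the coordinate for W
  have hτκ : ∀ l, τ⁻¹ * σ l ∈ K := fun l => hgenK 0 l
  choose mW hmW using fun l => hκpow _ (hτκ l)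
  have hσl : ∀ l, σ l = τ * κ ^ (mW l).val := by
    intro l
    rw [hmW l]; group
  have hmWinj : Function.Injective mW := by
    intro a b h
    apply hσinj
    rw [hσl a, hσl b, h]
  have hmWbij := Finite.injective_iff_bijective.mp hmWinj
  -- affinity of the d's in the coordinate mW
  have keyd : ∀ i a l : ZMod p,
      mW l = c' * mW (d i a l) + mW ((d a i)⁻¹ 0) := by
    intro i a l
    have h := E1' i a 0 l
    rw [hσl l, hσl (d i a l), hσl ((d a i)⁻¹ 0), ← hτ] at h
    set A := κ ^ (mW l).val
    set B := κ ^ (mW (d i a l)).val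
    set C := κ ^ (mW ((d a i)⁻¹ 0)).val
    have h4 : τ * τ * A = τ * τ * ((τ⁻¹ * B * τ) * C) := by
      calc τ * τ * A = τ * (τ * A) := by group
      _ = (τ * B) * (τ * C) := h
      _ = τ * τ * ((τ⁻¹ * B * τ) * C) := by group
    have h5 : A = (τ⁻¹ * B * τ) * C := by
      exact mul_left_cancel h4
    rw [ηconjτ (mW (d i a l))] at h5
    rw [← ηadd] at h5
    exact ηinj _ _ h5
  have haffd : ∀ i a : ZMod p, ∃ s : (ZMod p)ˣ, ∃ t : ZMod p,
      ∀ l, mW (d i a l) = s * mW l + t := by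
    intro i a
    refine ⟨(Units.mk0 c' hc'0)⁻¹, -(c'⁻¹ * mW ((d a i)⁻¹ 0)), fun l => ?_⟩
    have h := keyd i a l
    rw [Units.val_inv_eq_inv_val]
    simp only [Units.val_mk0]
    have h2 : c' * mW (d i a l) = mW l - mW ((d a i)⁻¹ 0) := by linear_combination -h
    calc mW (d i a l) = c'⁻¹ * (c' * mW (d i a l)) := by
          rw [← mul_assoc, inv_mul_cancel₀ hc'0, one_mul]
    _ = c'⁻¹ * (mW l - mW ((d a i)⁻¹ 0)) := by rw [h2]
    _ = c'⁻¹ * mW l + -(c'⁻¹ * mW ((d a i)⁻¹ 0)) := by ring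
  -- W is inside the affine group for coordinate mW
  set mWE : ZMod p ≃ ZMod p := Equiv.ofBijective mW hmWbij with hmWE
  have hWle : Subgroup.closure {g : Equiv.Perm (ZMod p) | ∃ i k, d i k = g} ≤ YBAux.Aff p mWE := by
    rw [Subgroup.closure_le]
    rintro g ⟨i, k, rfl⟩
    obtain ⟨s, t, hst⟩ := haffd i k
    exact ⟨s, t, fun x => hst x⟩
  have Wpart := YBAux.aff_main p mWE
    (Subgroup.closure {g : Equiv.Perm (ZMod p) | ∃ i k, d i k = g}) hWle hWtrans
  -- ===================  F side  ===================
  have hφbij : Function.Bijective (fun e : ZMod p => (κ ^ e.val) 0) := by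
    constructor
    · intro a b h
      simp only at h
      apply ηinj
      have hmem : (κ ^ b.val)⁻¹ * κ ^ a.val ∈ K :=
        mul_mem (inv_mem (pow_mem hκK _)) (pow_mem hκK _)
      have hfix : ((κ ^ b.val)⁻¹ * κ ^ a.val) 0 = 0 := by
        rw [Equiv.Perm.mul_apply, h]
        exact (κ ^ b.val).symm_apply_apply 0
      have h1 := hKfree _ hmem 0 hfix
      calc κ ^ a.val = κ ^ b.val * ((κ ^ b.val)⁻¹ * κ ^ a.val) := by group
      _ = κ ^ b.val * 1 := by rw [h1]
      _ = κ ^ b.val := by group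
    · intro y
      obtain ⟨g, hgK, hg0⟩ := hKtrans 0 y
      obtain ⟨e, he⟩ := hκpow g hgK
      exact ⟨e, by simp only; rw [he]; exact hg0⟩
  set φE : ZMod p ≃ ZMod p := Equiv.ofBijective _ hφbij with hφE
  set mF : ZMod p ≃ ZMod p := φE.symm with hmF
  have haffσ : ∀ j : ZMod p, ∃ s : (ZMod p)ˣ, ∃ t : ZMod p,
      ∀ x, mF (σ j x) = s * mF x + t := by
    intro j
    have hjF : σ j ∈ Subgroup.closure (Set.range σ) := Subgroup.subset_closure ⟨j, rfl⟩
    have hconjK : σ j * κ * (σ j)⁻¹ ∈ K := (hFnorm (σ j) hjF κ).mp hκK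
    obtain ⟨cj, hcj⟩ := hκpow _ hconjK
    have hcj0 : cj ≠ 0 := by
      intro h
      rw [h] at hcj
      simp only [ZMod.val_zero, pow_zero] at hcj
      have hκ1 : κ = 1 := by
        calc κ = (σ j)⁻¹ * (σ j * κ * (σ j)⁻¹) * σ j := by group
        _ = (σ j)⁻¹ * 1 * σ j := by rw [← hcj]
        _ = 1 := by group
      rw [hκ1] at hκord
      simp at hκord
      have := hp.one_lt
      omega
    have hconjpow := ηconj (σ j) cj hcj.symm
    obtain ⟨bj, hbj⟩ : ∃ bj : ZMod p, (κ ^ bj.val) 0 = σ j 0 := hφbij.2 (σ j 0)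
    refine ⟨Units.mk0 cj hcj0, bj, fun x => ?_⟩
    have hx : (κ ^ (mF x).val) 0 = x := φE.apply_symm_apply x
    have hcompute : σ j x = (κ ^ ((cj * mF x) + bj).val) 0 := by
      conv_lhs => rw [← hx]
      rw [ηadd, Equiv.Perm.mul_apply, hbj]
      have h2 : σ j ((κ ^ (mF x).val) 0) = (σ j * κ ^ (mF x).val * (σ j)⁻¹) (σ j 0) := by
        simp only [Equiv.Perm.mul_apply]
        congr 1
        rw [(show ∀ x, (σ j)⁻¹ (σ j x) = x from (σ j).symm_apply_apply)]
      rw [h2, hconjpow (mF x)]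
    rw [hcompute]
    have h3 := φE.symm_apply_apply (cj * mF x + bj)
    have h4 : φE (cj * mF x + bj) = (κ ^ ((cj * mF x) + bj).val) 0 := rfl
    rw [h4] at h3
    rw [show (mF : ZMod p ≃ ZMod p) = φE.symm from hmF]
    rw [h3]
    simp [Units.val_mk0, hmF]
  have hFle : Subgroup.closure (Set.range σ) ≤ YBAux.Aff p mF := by
    rw [Subgroup.closure_le]
    rintro g ⟨j, rfl⟩
    obtain ⟨s, t, h⟩ := haffσ j
    exact ⟨s, t, h⟩
  have Fpart := YBAux.aff_main p mF (Subgroup.closure (Set.range σ)) hFle hFtrans'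
  exact ⟨Fpart, Wpart⟩
end

section
/- Let p be a prime number, let X = ℤ/(p) × ℤ/(p), and let (X,r) be an indecomposable and irretractable solution of the YBE such that r((i,j),(k,l)) = (σ_{(i,j)}(k,l), σ_{σ_{(i,j)}(k,l)}⁻¹(i,j)) with σ_{(i,j)}(k,l) = (σ_j(k), d_{i,σ_j(k)}(l)) for some families of permutations σ_j and d_{i,k} of ℤ/(p). Let F = ⟨σ_j : j ∈ ℤ/(p)⟩ ≤ Sym(ℤ/(p)) and W = ⟨d_{i,k} : i,k ∈ ℤ/(p)⟩ ≤ Sym(ℤ/(p)). Then F has order p (equivalently, F is cyclic of order p) if and only if W has order p. -/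
open Function

/-- Elements of the closure of a set of pairwise commuting elements commute. -/
lemma comm_of_closure {G : Type*} [Group G] (s : Set G)
    (hs : ∀ x ∈ s, ∀ y ∈ s, x * y = y * x) :
    ∀ x ∈ Subgroup.closure s, ∀ y ∈ Subgroup.closure s, x * y = y * x := by
  intro x hx y hy
  refine Subgroup.closure_induction₂ (p := fun x y _ _ => Commute x y)
    (fun a b ha hb => hs a ha b hb)
    (fun x _ => Commute.one_left x) (fun x _ => Commute.one_right x)
    (fun _ _ _ _ _ _ h1 h2 => h1.mul_left h2)
    (fun _ _ _ _ _ _ h1 h2 => h1.mul_right h2)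
    (fun _ _ _ _ h => h.inv_left) (fun _ _ _ _ h => h.inv_right) hx hy

theorem Equiv.Perm.apply_inv_self {α : Type*} (f : Equiv.Perm α) (x : α) : f (f⁻¹ x) = x :=
  f.apply_symm_apply x

/-- for an indecomposable irretractable solution on `(ℤ/(p))²` of
the special product form, `F = ⟨σ_j⟩` has order `p` if and only if
`W = ⟨d_{i,k}⟩` has order `p`. -/
theorem F_card_p_iff_W_card_p (p : ℕ) [Fact p.Prime]
    (σ : ZMod p → Equiv.Perm (ZMod p)) (d : ZMod p → ZMod p → Equiv.Perm (ZMod p))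
    (r : (ZMod p × ZMod p) × (ZMod p × ZMod p) → (ZMod p × ZMod p) × (ZMod p × ZMod p))
    (hr : ∀ i j k l : ZMod p,
      r ((i, j), (k, l)) = ((σ j k, d i (σ j k) l),
        ((σ (d i (σ j k) l))⁻¹ i, (d (σ j k) i)⁻¹ j)))
    (hsol : IsYBSolution r) (hind : IsIndecomposable r) (hirr : IsIrretractable r) :
    Nat.card ↥(Subgroup.closure (Set.range σ)) = p ↔
    Nat.card ↥(Subgroup.closure {g : Equiv.Perm (ZMod p) | ∃ i k, d i k = g}) = p := by
  have hp : p.Prime := Fact.out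
  haveI : NeZero p := ⟨hp.ne_zero⟩
  haveI : Fact (1 < p) := ⟨hp.one_lt⟩
  set F := Subgroup.closure (Set.range σ) with hFdef
  set W := Subgroup.closure {g : Equiv.Perm (ZMod p) | ∃ i k, d i k = g} with hWdef
  have hσF : ∀ j, σ j ∈ F := fun j => Subgroup.subset_closure ⟨j, rfl⟩
  have hdW : ∀ i m, d i m ∈ W := fun i m => Subgroup.subset_closure ⟨i, m, rfl⟩
  -- the key consequence of the braid relation (first components)
  have cond1p : ∀ i j k l a : ZMod p,
      σ j (σ l a) = σ (d i (σ j k) l) (σ ((d (σ j k) i)⁻¹ j) a) := by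
    intro i j k l a
    have hb := congrFun hsol.braid ((i, j), (k, l), (a, 0))
    simp only [comp_apply, yb12, yb23, hr] at hb
    exact (congrArg (fun t => t.1.1) hb).symm
  have cond1 : ∀ i m j l : ZMod p,
      σ j * σ l = σ (d i m l) * σ ((d m i)⁻¹ j) := by
    intro i m j l
    ext a
    have h := cond1p i j ((σ j)⁻¹ m) l a
    rw [Equiv.Perm.apply_inv_self] at h
    simpa [Equiv.Perm.mul_apply] using h
  -- irretractability: σ is injective
  have irr1 : Function.Injective σ := by
    intro j j' h
    have h2 := hirr (0, j) (0, j') ?_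
    · exact (Prod.ext_iff.mp h2).2
    · rintro ⟨k, l⟩
      rw [hr, hr, h]
  -- irretractability: not all d's coincide
  have hdd : ∃ i₀ m₀ i₁ m₁ : ZMod p, d i₀ m₀ ≠ d i₁ m₁ := by
    by_contra hc
    push_neg at hc
    have h2 := hirr (0, 0) (1, 0) ?_
    · exact zero_ne_one (Prod.ext_iff.mp h2).1
    · rintro ⟨k, l⟩
      rw [hr, hr, hc 0 (σ 0 k) 1 (σ 0 k)]
  -- indecomposability: F acts transitively on ZMod p
  have hGproj : ∀ G ∈ permGroup r, ∃ g ∈ F, ∀ k l : ZMod p, (G (k, l)).1 = g k := by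
    intro G hG
    have hG' : G ∈ Subgroup.closure
        {g : Equiv.Perm (ZMod p × ZMod p) | ∃ x, ∀ y, g y = (r (x, y)).1} := hG
    clear hG
    induction hG' using Subgroup.closure_induction with
    | mem x hx =>
      obtain ⟨⟨i, j⟩, hx⟩ := hx
      exact ⟨σ j, hσF j, fun k l => by simp [hx (k, l), hr]⟩
    | one => exact ⟨1, one_mem F, fun k l => rfl⟩
    | mul x y hx hy ihx ihy =>
      obtain ⟨g, hg, ih⟩ := ihx
      obtain ⟨g', hg', ih'⟩ := ihy
      refine ⟨g * g', mul_mem hg hg', fun k l => ?_⟩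
      have h2 := ih (y (k, l)).1 (y (k, l)).2
      rw [Prod.mk.eta] at h2
      calc ((x * y) (k, l)).1 = (x (y (k, l))).1 := rfl
        _ = g (y (k, l)).1 := h2
        _ = g (g' k) := by rw [ih' k l]
        _ = (g * g') k := rfl
    | inv x hx ihx =>
      obtain ⟨g, hg, ih⟩ := ihx
      refine ⟨g⁻¹, inv_mem hg, fun k l => ?_⟩
      have h2 := ih (x⁻¹ (k, l)).1 (x⁻¹ (k, l)).2
      rw [Prod.mk.eta, Equiv.Perm.apply_inv_self] at h2
      have h3 : g ((x⁻¹ (k, l)).1) = g (g⁻¹ k) := by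
        rw [Equiv.Perm.apply_inv_self]; exact h2.symm
      exact g.injective h3
  have htrans : ∀ k k' : ZMod p, ∃ g ∈ F, g k = k' := by
    intro k k'
    obtain ⟨G, hG, hGk⟩ := hind (k, 0) (k', 0)
    obtain ⟨g, hg, hproj⟩ := hGproj G hG
    refine ⟨g, hg, ?_⟩
    have := hproj k 0
    rw [hGk] at this
    exact this.symm
  constructor
  · -- |F| = p → |W| = p
    intro hF
    haveI : IsCyclic ↥F := isCyclic_of_prime_card hF
    have hcomm : ∀ x ∈ F, ∀ y ∈ F, x * y = y * x := by
      intro x hx y hy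
      letI : CommGroup ↥F := IsCyclic.commGroup
      have h2 := mul_comm (⟨x, hx⟩ : ↥F) ⟨y, hy⟩
      exact congrArg Subtype.val h2
    set H : Subgroup (Equiv.Perm (ZMod p)) :=
      { carrier := {w | ∃ β ∈ F, ∀ l, σ (w l) = β * σ l}
        one_mem' := ⟨1, one_mem F, fun l => by simp⟩
        mul_mem' := by
          rintro w w' ⟨β, hβ, h⟩ ⟨β', hβ', h'⟩
          exact ⟨β * β', mul_mem hβ hβ', fun l => by
            rw [Equiv.Perm.mul_apply, h, h', mul_assoc]⟩
        inv_mem' := by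
          rintro w ⟨β, hβ, h⟩
          refine ⟨β⁻¹, inv_mem hβ, fun l => ?_⟩
          have h2 := h (w⁻¹ l)
          rw [Equiv.Perm.apply_inv_self] at h2
          rw [h2]
          group } with hHdef
    have hWH : W ≤ H := by
      rw [hWdef]
      refine (Subgroup.closure_le H).mpr ?_
      rintro g ⟨i, m, rfl⟩
      have hβF : σ 0 * (σ ((d m i)⁻¹ 0))⁻¹ ∈ F :=
        mul_mem (hσF 0) (inv_mem (hσF _))
      refine ⟨σ 0 * (σ ((d m i)⁻¹ 0))⁻¹, hβF, fun l => ?_⟩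
      have hc0 : Commute (σ l) (σ ((d m i)⁻¹ 0)) := hcomm (σ l) (hσF l) _ (hσF _)
      have hc : Commute (σ l) ((σ ((d m i)⁻¹ 0))⁻¹) := hc0.inv_right
      have h := cond1 i m 0 l
      have h2 : σ (d i m l) = (σ 0 * σ l) * (σ ((d m i)⁻¹ 0))⁻¹ := by
        rw [h]; group
      rw [h2, mul_assoc, hc.eq, ← mul_assoc]
    have hβval : ∀ w (hw : w ∈ W), σ (w 0) * (σ 0)⁻¹ ∈ F := by
      intro w hw
      obtain ⟨β, hβ, h⟩ := hWH hw
      have : σ (w 0) * (σ 0)⁻¹ = β := by rw [h 0]; group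
      rw [this]; exact hβ
    set Φ : ↥W →* ↥F := MonoidHom.mk'
      (fun w => ⟨σ (w.1 0) * (σ 0)⁻¹, hβval w.1 w.2⟩) (by
        intro w w'
        obtain ⟨β, hβ, h⟩ := hWH w.2
        have hβeq : σ (w.1 0) * (σ 0)⁻¹ = β := by rw [h 0]; group
        refine Subtype.ext ?_
        show σ ((w.1 * w'.1) 0) * (σ 0)⁻¹ = (σ (w.1 0) * (σ 0)⁻¹) * (σ (w'.1 0) * (σ 0)⁻¹)
        rw [Equiv.Perm.mul_apply, h (w'.1 0), hβeq]
        group) with hΦdef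
    have hΦinj : Function.Injective Φ := by
      intro w w' hww
      obtain ⟨β, hβ, h⟩ := hWH w.2
      obtain ⟨β', hβ', h'⟩ := hWH w'.2
      have hβeq : σ (w.1 0) * (σ 0)⁻¹ = β := by rw [h 0]; group
      have hβ'eq : σ (w'.1 0) * (σ 0)⁻¹ = β' := by rw [h' 0]; group
      have hval : σ (w.1 0) * (σ 0)⁻¹ = σ (w'.1 0) * (σ 0)⁻¹ :=
        congrArg Subtype.val hww
      have hββ' : β = β' := by rw [← hβeq, ← hβ'eq, hval]
      refine Subtype.ext (Equiv.ext fun l => ?_)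
      apply irr1
      rw [h l, h' l, hββ']
    have hdvd : Nat.card ↥W ∣ Nat.card ↥F := Subgroup.card_dvd_of_injective Φ hΦinj
    rw [hF] at hdvd
    rcases hp.eq_one_or_self_of_dvd _ hdvd with h1 | h1
    · exfalso
      obtain ⟨i₀, m₀, i₁, m₁, hne⟩ := hdd
      have hb : W = ⊥ := Subgroup.eq_bot_of_card_eq _ h1
      have e0 : d i₀ m₀ = 1 := by
        have := hdW i₀ m₀; rw [hb, Subgroup.mem_bot] at this; exact this
      have e1 : d i₁ m₁ = 1 := by
        have := hdW i₁ m₁; rw [hb, Subgroup.mem_bot] at this; exact this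
      exact hne (e0.trans e1.symm)
    · exact h1
  · -- |W| = p → |F| = p
    intro hW
    obtain ⟨i₀, m₀, i₁, m₁, hne⟩ := hdd
    set D₀ := d i₀ m₀ with hD₀
    set D₁ := d i₁ m₁ with hD₁
    set E₀ := (d m₀ i₀)⁻¹ with hE₀
    set E₁ := (d m₁ i₁)⁻¹ with hE₁
    have hD₀W : D₀ ∈ W := hdW i₀ m₀
    have hD₁W : D₁ ∈ W := hdW i₁ m₁
    have hE₀W : E₀ ∈ W := inv_mem (hdW m₀ i₀)
    have hE₁W : E₁ ∈ W := inv_mem (hdW m₁ i₁)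
    set α := (σ (D₁ 0))⁻¹ * σ (D₀ 0) with hα
    have R1 : ∀ l, σ (D₀ l) = σ (D₁ l) * α := by
      intro l
      have h0 := cond1 i₀ m₀ 0 l
      have h1 := cond1 i₁ m₁ 0 l
      rw [← hD₀, ← hE₀] at h0
      rw [← hD₁, ← hE₁] at h1
      have e0 : σ (D₀ l) = (σ 0 * σ l) * (σ (E₀ 0))⁻¹ := by rw [h0]; group
      have e1 : σ (D₁ l) = (σ 0 * σ l) * (σ (E₁ 0))⁻¹ := by rw [h1]; group
      have h00 := cond1 i₀ m₀ 0 0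
      have h10 := cond1 i₁ m₁ 0 0
      rw [← hD₀, ← hE₀] at h00
      rw [← hD₁, ← hE₁] at h10
      have e00 : σ (D₀ 0) = (σ 0 * σ 0) * (σ (E₀ 0))⁻¹ := by rw [h00]; group
      have e10 : σ (D₁ 0) = (σ 0 * σ 0) * (σ (E₁ 0))⁻¹ := by rw [h10]; group
      rw [e0, e1, hα, e00, e10]
      group
    have R2 : ∀ j, σ (E₁ j) = α * σ (E₀ j) := by
      intro j
      have h0 := cond1 i₀ m₀ j 0
      have h1 := cond1 i₁ m₁ j 0
      rw [← hD₀, ← hE₀] at h0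
      rw [← hD₁, ← hE₁] at h1
      have e0 : σ (E₀ j) = (σ (D₀ 0))⁻¹ * (σ j * σ 0) := by
        rw [h0]; group
      have e1 : σ (E₁ j) = (σ (D₁ 0))⁻¹ * (σ j * σ 0) := by
        rw [h1]; group
      rw [e0, e1, hα]
      group
    set T := D₀ * D₁⁻¹ with hT
    set S := E₁ * E₀⁻¹ with hS
    have hTW : T ∈ W := mul_mem hD₀W (inv_mem hD₁W)
    have hSW : S ∈ W := mul_mem hE₁W (inv_mem hE₀W)
    have hT1 : T ≠ 1 := by
      intro h
      exact hne (by rwa [hT, mul_inv_eq_one] at h)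
    have R1' : ∀ m, σ (T m) = σ m * α := by
      intro m
      have h := R1 (D₁⁻¹ m)
      rw [Equiv.Perm.apply_inv_self] at h
      exact h
    have R2' : ∀ m, σ (S m) = α * σ m := by
      intro m
      have h := R2 (E₀⁻¹ m)
      rw [Equiv.Perm.apply_inv_self] at h
      exact h
    have R1'' : ∀ (n : ℕ) (m : ZMod p), σ ((T ^ n) m) = σ m * α ^ n := by
      intro n
      induction n with
      | zero => intro m; simp
      | succ n ih =>
        intro m
        have : (T ^ (n + 1)) m = (T ^ n) (T m) := by
          rw [pow_succ, Equiv.Perm.mul_apply]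
        rw [this, ih (T m), R1' m, pow_succ']
        group
    have hgen : ∀ w ∈ W, ∃ n : ℕ, T ^ n = w := by
      intro w hw
      have hT1' : (⟨T, hTW⟩ : ↥W) ≠ 1 := by
        intro h
        exact hT1 (congrArg Subtype.val h)
      obtain ⟨n, hn⟩ := mem_powers_of_prime_card (G := ↥W) hW
        (g := ⟨T, hTW⟩) (g' := ⟨w, hw⟩) hT1'
      refine ⟨n, ?_⟩
      have := congrArg Subtype.val hn
      simpa using this
    obtain ⟨n, hn⟩ := hgen S hSW
    obtain ⟨na, ha⟩ := hgen D₀ hD₀W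
    obtain ⟨nb, hb⟩ := hgen E₀ hE₀W
    have R3 : ∀ m, α * σ m = σ m * α ^ n := by
      intro m
      rw [← R2' m, ← R1'' n m, hn]
    have conj : ∀ (k : ℕ) (j : ZMod p), α ^ k * σ j = σ j * α ^ (n * k) := by
      intro k
      induction k with
      | zero => intro j; simp
      | succ k ih =>
        intro j
        calc α ^ (k + 1) * σ j = α ^ k * (α * σ j) := by rw [pow_succ']; group
          _ = α ^ k * (σ j * α ^ n) := by rw [R3 j]
          _ = (σ j * α ^ (n * k)) * α ^ n := by rw [← mul_assoc, ih j]
          _ = σ j * α ^ (n * (k + 1)) := by rw [mul_assoc, ← pow_add, Nat.mul_succ]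
    have hcs : ∀ j l, σ j * σ l = (σ l * σ j) * α ^ (n * na + nb) := by
      intro j l
      have h := cond1 i₀ m₀ j l
      rw [← hD₀, ← hE₀, ← ha, ← hb, R1'' na l, R1'' nb j] at h
      rw [h, pow_add]
      calc (σ l * α ^ na) * (σ j * α ^ nb)
          = σ l * (α ^ na * σ j) * α ^ nb := by group
        _ = σ l * (σ j * α ^ (n * na)) * α ^ nb := by rw [conj na j]
        _ = σ l * σ j * (α ^ (n * na) * α ^ nb) := by group
    have hα1 : α ^ (n * na + nb) = 1 := by
      have h := hcs 0 0
      exact left_eq_mul.mp h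
    have hcommσ : ∀ j l, σ j * σ l = σ l * σ j := by
      intro j l
      rw [hcs j l, hα1, mul_one]
    have hcommF : ∀ x ∈ F, ∀ y ∈ F, x * y = y * x := by
      refine comm_of_closure _ ?_
      rintro x ⟨j, rfl⟩ y ⟨l, rfl⟩
      exact hcommσ j l
    have e_bij : Function.Bijective (fun g : ↥F => (g.1 : Equiv.Perm (ZMod p)) 0) := by
      constructor
      · intro g h hgh
        have hgh' : (g.1 : Equiv.Perm (ZMod p)) 0 = h.1 0 := hgh
        refine Subtype.ext (Equiv.ext fun k => ?_)
        obtain ⟨t, htF, htk⟩ := htrans 0 k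
        calc g.1 k = g.1 (t 0) := by rw [htk]
          _ = (g.1 * t) 0 := rfl
          _ = (t * g.1) 0 := by rw [hcommF g.1 g.2 t htF]
          _ = t (g.1 0) := rfl
          _ = t (h.1 0) := by rw [hgh']
          _ = (t * h.1) 0 := rfl
          _ = (h.1 * t) 0 := by rw [hcommF h.1 h.2 t htF]
          _ = h.1 (t 0) := rfl
          _ = h.1 k := by rw [htk]
      · intro k
        obtain ⟨g, hg, hgk⟩ := htrans 0 k
        exact ⟨⟨g, hg⟩, hgk⟩
    calc Nat.card ↥F = Nat.card (ZMod p) := Nat.card_eq_of_bijective _ e_bij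
      _ = p := Nat.card_zmod p
end
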